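/- Let X, Y be real normed linear spaces and x ∈ X nonzero. A bounded linear operator T : X → Y preserves Birkhoff-James orthogonality at x (i.e., T(x^⊥_B) ⊆ (Tx)^⊥_B) if and only if for each associated cone V of x there exists a convex set S ⊆ (Tx)^⊥_B with T(V) ⊆ S. -/

import Mathlib

/-- Birkhoff-James orthogonality. -/
def BJOrth {X : Type*} [NormedAddCommGroup X] [NormedSpace ℝ X] (x y : X) : Prop :=
  ∀ t : ℝ, ‖x‖ ≤ ‖x + t • y‖

/-- The set of support functionals at `x`. -/
def suppFun {X : Type*} [NormedAddCommGroup X] [NormedSpace ℝ X] (x : X) :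
    Set (X →L[ℝ] ℝ) := {f | ‖f‖ = 1 ∧ f x = ‖x‖}

section Aux

open Pointwise

variable {X : Type*} [NormedAddCommGroup X] [NormedSpace ℝ X]

/-- If some functional of norm ≤ 1 norms `x` and kills `y`, then `x ⊥_B y`. -/
lemma norm_smul_clm (a : ℝ) (f : X →L[ℝ] ℝ) : ‖a • f‖ = |a| * ‖f‖ := by
  rw [@norm_smul ℝ _ _ _ _ _ a f, Real.norm_eq_abs]

lemma bjOrth_of_funct (x y : X) (h : X →L[ℝ] ℝ) (hn : ‖h‖ ≤ 1)
    (hx : h x = ‖x‖) (hy : h y = 0) : BJOrth x y := by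
  intro t
  have h1 : h (x + t • y) = ‖x‖ := by
    rw [map_add, map_smul, hy, smul_zero, add_zero, hx]
  calc ‖x‖ = h (x + t • y) := h1.symm
    _ ≤ |h (x + t • y)| := le_abs_self _
    _ ≤ ‖h‖ * ‖x + t • y‖ := h.le_opNorm _
    _ ≤ 1 * ‖x + t • y‖ := by
        exact mul_le_mul_of_nonneg_right hn (norm_nonneg _)
    _ = ‖x + t • y‖ := one_mul _

/-- James' characterization (hard direction): if `x ⊥_B y` then some support functional
at `x` kills `y`. -/
lemma exists_suppFun_eq_zero (x : X) (hx : x ≠ 0) (y : X) (hxy : BJOrth x y) :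
    ∃ f : X →L[ℝ] ℝ, f ∈ suppFun x ∧ f y = 0 := by
  classical
  set N : X → ℝ := fun z => ⨅ t : ℝ, ‖z + t • y‖ with hN
  have hbdd : ∀ z : X, BddBelow (Set.range fun t : ℝ => ‖z + t • y‖) := fun z =>
    ⟨0, by rintro _ ⟨t, rfl⟩; exact norm_nonneg _⟩
  have hNle : ∀ z : X, ∀ t : ℝ, N z ≤ ‖z + t • y‖ := fun z t => ciInf_le (hbdd z) t
  have hNnonneg : ∀ z : X, 0 ≤ N z := fun z =>
    le_ciInf fun t => norm_nonneg _
  have hNx : N x = ‖x‖ := by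
    refine le_antisymm ?_ (le_ciInf fun t => hxy t)
    simpa using hNle x 0
  have N_hom : ∀ c : ℝ, 0 < c → ∀ z : X, N (c • z) = c * N z := by
    intro c hc z
    have hrange : (Set.range fun t : ℝ => ‖c • z + t • y‖)
        = c • Set.range fun s : ℝ => ‖z + s • y‖ := by
      ext r
      constructor
      · rintro ⟨t, rfl⟩
        refine ⟨‖z + (t / c) • y‖, ⟨t / c, rfl⟩, ?_⟩
        show c • ‖z + (t / c) • y‖ = ‖c • z + t • y‖
        have h1 : c • z + t • y = c • (z + (t / c) • y) := by
          rw [smul_add, smul_smul, mul_div_cancel₀ _ hc.ne']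
        rw [h1, norm_smul, Real.norm_eq_abs, abs_of_pos hc, smul_eq_mul]
      · rintro ⟨_, ⟨s, rfl⟩, rfl⟩
        refine ⟨c * s, ?_⟩
        show ‖c • z + (c * s) • y‖ = c • ‖z + s • y‖
        have h1 : c • z + (c * s) • y = c • (z + s • y) := by
          rw [smul_add, smul_smul]
        rw [h1, norm_smul, Real.norm_eq_abs, abs_of_pos hc, smul_eq_mul]
    have := Real.sInf_smul_of_nonneg hc.le (Set.range fun s : ℝ => ‖z + s • y‖)
    calc N (c • z) = sInf (Set.range fun t : ℝ => ‖c • z + t • y‖) := rfl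
      _ = sInf (c • Set.range fun s : ℝ => ‖z + s • y‖) := by rw [hrange]
      _ = c • sInf (Set.range fun s : ℝ => ‖z + s • y‖) := this
      _ = c * N z := rfl
  have N_add : ∀ z w : X, N (z + w) ≤ N z + N w := by
    intro z w
    refine le_ciInf_add_ciInf fun t s => ?_
    calc N (z + w) ≤ ‖(z + w) + (t + s) • y‖ := hNle _ _
      _ = ‖(z + t • y) + (w + s • y)‖ := by congr 1; module
      _ ≤ ‖z + t • y‖ + ‖w + s • y‖ := norm_add_le _ _
  set f : X →ₗ.[ℝ] ℝ := LinearPMap.mkSpanSingleton x ‖x‖ hx with hf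
  have hdom : f.domain = Submodule.span ℝ {x} := rfl
  have hfle : ∀ z : f.domain, f z ≤ N z := by
    rintro ⟨z, hz⟩
    rw [hdom] at hz
    obtain ⟨c, rfl⟩ := Submodule.mem_span_singleton.1 hz
    have happ : f ⟨c • x, hz⟩ = c • ‖x‖ := LinearPMap.mkSpanSingleton'_apply _ _ _ c _
    rw [happ]
    rcases lt_trichotomy c 0 with hc | hc | hc
    · have : c • ‖x‖ ≤ 0 := smul_nonpos_of_nonpos_of_nonneg hc.le (norm_nonneg _)
      exact this.trans (hNnonneg _)
    · simp [hc, hNnonneg]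
    · rw [N_hom c hc x, hNx]; exact le_of_eq rfl
  obtain ⟨g, hg1, hg2⟩ := exists_extension_of_le_sublinear f N N_hom N_add hfle
  have hgx : g x = ‖x‖ := by
    have hmem : x ∈ f.domain := by
      rw [hdom]; exact Submodule.mem_span_singleton_self x
    have := hg1 ⟨x, hmem⟩
    rw [LinearPMap.mkSpanSingleton_apply ℝ ℝ hx ‖x‖] at this
    simpa using this
  have hgbound : ∀ z : X, |g z| ≤ ‖z‖ := by
    intro z
    have h1 : g z ≤ ‖z‖ := (hg2 z).trans (by simpa using hNle z 0)
    have h2 : -(g z) ≤ ‖z‖ := by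
      have := (hg2 (-z)).trans (by simpa using hNle (-z) 0)
      rwa [map_neg] at this
    exact abs_le.2 ⟨by linarith, h1⟩
  set G : X →L[ℝ] ℝ := g.mkContinuous 1 (fun z => by
    rw [one_mul]; simpa [Real.norm_eq_abs] using hgbound z) with hG
  have hGapp : ∀ z : X, G z = g z := fun z => rfl
  have hGx : G x = ‖x‖ := hgx
  have hGnorm_le : ‖G‖ ≤ 1 := g.mkContinuous_norm_le (by norm_num) _
  have hGnorm : ‖G‖ = 1 := by
    refine le_antisymm hGnorm_le ?_
    have hxpos : (0 : ℝ) < ‖x‖ := norm_pos_iff.2 hx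
    have := G.le_opNorm x
    rw [hGx, Real.norm_eq_abs, abs_of_nonneg (norm_nonneg x)] at this
    nlinarith
  have hGy : G y = 0 := by
    have hy1 : N y ≤ 0 := by simpa using hNle y (-1)
    have hy2 : N (-y) ≤ 0 := by simpa using hNle (-y) 1
    have h1 : g y ≤ 0 := (hg2 y).trans hy1
    have h2 : g (-y) ≤ 0 := (hg2 (-y)).trans hy2
    rw [map_neg] at h2
    show g y = 0
    linarith
  exact ⟨G, ⟨hGnorm, hGx⟩, hGy⟩

open NormedSpace WeakDual in
/-- Bauer-type maximum principle: there is an extreme point of the set of support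
functionals which is nonnegative at `y`, provided some support functional is. -/
lemma exists_extreme_nonneg (x : X) (hx : x ≠ 0) (y : X)
    (f₀ : X →L[ℝ] ℝ) (hf₀ : f₀ ∈ suppFun x) (h0 : 0 ≤ f₀ y) :
    ∃ f ∈ Set.extremePoints ℝ (suppFun x), 0 ≤ f y := by
  classical
  set e : StrongDual ℝ X ≃ₗ[ℝ] WeakDual ℝ X := StrongDual.toWeakDual with he
  set K : Set (WeakDual ℝ X) := e '' suppFun x with hK
  have hxpos : (0 : ℝ) < ‖x‖ := norm_pos_iff.2 hx
  have hKdesc : K = (toStrongDual ⁻¹' Metric.closedBall 0 1) ∩ {φ : WeakDual ℝ X | φ x = ‖x‖} := by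
    ext φ
    constructor
    · rintro ⟨f, ⟨hf1, hf2⟩, rfl⟩
      refine ⟨?_, hf2⟩
      simp only [Set.mem_preimage, Metric.mem_closedBall, dist_zero_right]
      exact le_of_eq hf1
    · rintro ⟨h1, h2⟩
      refine ⟨toStrongDual φ, ⟨?_, h2⟩, rfl⟩
      simp only [Set.mem_preimage, Metric.mem_closedBall, dist_zero_right] at h1
      refine le_antisymm h1 ?_
      have := (toStrongDual φ).le_opNorm x
      have hφx : toStrongDual φ x = ‖x‖ := h2
      rw [hφx, Real.norm_eq_abs, abs_of_nonneg (norm_nonneg x)] at this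
      nlinarith
  have hclosed2 : IsClosed {φ : WeakDual ℝ X | φ x = ‖x‖} := by
    have : {φ : WeakDual ℝ X | φ x = ‖x‖} = (fun φ : WeakDual ℝ X => φ x) ⁻¹' {(‖x‖ : ℝ)} := rfl
    rw [this]
    exact IsClosed.preimage (WeakDual.eval_continuous x) isClosed_singleton
  have hKcomp : IsCompact K := by
    rw [hKdesc]
    exact (WeakDual.isCompact_closedBall (0 : StrongDual ℝ X) 1).inter_right hclosed2
  have hsuppconv : Convex ℝ (suppFun x) := by
    rintro f ⟨hf1, hf2⟩ g ⟨hg1, hg2⟩ a b ha hb hab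
    constructor
    · refine le_antisymm ?_ ?_
      · calc ‖a • f + b • g‖ ≤ ‖a • f‖ + ‖b • g‖ := norm_add_le _ _
          _ = |a| * ‖f‖ + |b| * ‖g‖ := by
              rw [norm_smul_clm, norm_smul_clm]
          _ = 1 := by rw [hf1, hg1, abs_of_nonneg ha, abs_of_nonneg hb]; linarith
      · have happ : (a • f + b • g) x = ‖x‖ := by
          simp only [ContinuousLinearMap.add_apply, ContinuousLinearMap.coe_smul',
            Pi.smul_apply, smul_eq_mul, hf2, hg2]
          linear_combination (‖x‖ : ℝ) * hab
        have := (a • f + b • g).le_opNorm x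
        rw [happ, Real.norm_eq_abs, abs_of_nonneg (norm_nonneg x)] at this
        nlinarith
    · simp only [ContinuousLinearMap.add_apply, ContinuousLinearMap.coe_smul',
        Pi.smul_apply, smul_eq_mul, hf2, hg2]
      linear_combination (‖x‖ : ℝ) * hab
  have hKconv : Convex ℝ K :=
    hsuppconv.is_linear_image ⟨e.map_add, e.map_smul⟩
  -- evaluation at y as a continuous linear functional on the weak dual
  set ℓ : WeakDual ℝ X →L[ℝ] ℝ :=
    ⟨{ toFun := fun φ => φ y
       map_add' := fun φ ψ => by exact rfl
       map_smul' := fun c φ => by exact rfl }, WeakDual.eval_continuous y⟩ with hℓ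
  have hKne : K.Nonempty := ⟨e f₀, f₀, hf₀, rfl⟩
  obtain ⟨φm, hφmK, hmax⟩ := hKcomp.exists_isMaxOn hKne ℓ.continuous.continuousOn
  set F : Set (WeakDual ℝ X) := {φ ∈ K | ∀ ψ ∈ K, ℓ ψ ≤ ℓ φ} with hF
  have hexp : IsExposed ℝ K F := fun _ => ⟨ℓ, rfl⟩
  have hFcomp : IsCompact F := hexp.isCompact hKcomp
  have hFne : F.Nonempty := ⟨φm, hφmK, fun ψ hψ => hmax hψ⟩
  haveI : LocallyConvexSpace ℝ (WeakDual ℝ X) := WeakBilin.locallyConvexSpace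
  obtain ⟨ε, hε⟩ := hFcomp.extremePoints_nonempty hFne
  have hεK : ε ∈ Set.extremePoints ℝ K :=
    hexp.isExtreme.extremePoints_subset_extremePoints hε
  have himg : e '' Set.extremePoints ℝ (suppFun x) = Set.extremePoints ℝ K :=
    image_extremePoints e (suppFun x)
  rw [← himg] at hεK
  obtain ⟨f, hfext, hfe⟩ := hεK
  refine ⟨f, hfext, ?_⟩
  have hεF : ε ∈ F := extremePoints_subset hε
  have : ℓ (e f₀) ≤ ℓ ε := hεF.2 (e f₀) ⟨f₀, hf₀, rfl⟩
  have hfy : f y = ℓ ε := by rw [← hfe]; rfl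
  have hf₀y : ℓ (e f₀) = f₀ y := rfl
  rw [hfy]
  rw [hf₀y] at this
  linarith

end Aux

theorem stmt_2 {X Y : Type*} [NormedAddCommGroup X] [NormedSpace ℝ X]
    [NormedAddCommGroup Y] [NormedSpace ℝ Y]
    (x : X) (hx : x ≠ 0) (T : X →L[ℝ] Y) :
    (∀ y : X, BJOrth x y → BJOrth (T x) (T y)) ↔
      ∀ f ∈ Set.extremePoints ℝ (suppFun x), ∀ g ∈ Set.extremePoints ℝ (suppFun x),
        ∃ S : Set Y, Convex ℝ S ∧ S ⊆ {w : Y | BJOrth (T x) w} ∧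
          T '' {y : X | 0 ≤ f y ∧ g y ≤ 0} ⊆ S := by
  constructor
  · intro hpres f hf g hg
    refine ⟨T '' {y : X | 0 ≤ f y ∧ g y ≤ 0}, ?_, ?_, subset_rfl⟩
    · have hVconv : Convex ℝ {y : X | 0 ≤ f y ∧ g y ≤ 0} := by
        have : {y : X | 0 ≤ f y ∧ g y ≤ 0}
            = {y : X | 0 ≤ f y} ∩ {y : X | g y ≤ 0} := rfl
        rw [this]
        exact (convex_halfSpace_ge ⟨map_add f, map_smul f⟩ 0).inter
          (convex_halfSpace_le ⟨map_add g, map_smul g⟩ 0)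
      have := hVconv.linear_image (T : X →ₗ[ℝ] Y)
      simpa using this
    · rintro _ ⟨y, ⟨hfy, hgy⟩, rfl⟩
      have hforth : f ∈ suppFun x := extremePoints_subset hf
      have hgorth : g ∈ suppFun x := extremePoints_subset hg
      -- find a norming functional vanishing at y
      have hxy : BJOrth x y := by
        rcases eq_or_lt_of_le hfy with heq | hlt
        · exact bjOrth_of_funct x y f (le_of_eq hforth.1) hforth.2 heq.symm
        · -- f y > 0, g y ≤ 0; take convex combination
          have hden : 0 < f y - g y := by linarith
          set s : ℝ := f y / (f y - g y) with hs
          have hs0 : 0 < s := div_pos hlt hden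
          have hs1 : s ≤ 1 := by
            rw [div_le_one hden]; linarith
          set h : X →L[ℝ] ℝ := (1 - s) • f + s • g with hh
          have hhy : h y = 0 := by
            simp only [hh, ContinuousLinearMap.add_apply, ContinuousLinearMap.coe_smul',
              Pi.smul_apply, smul_eq_mul, hs]
            field_simp
            ring
          have hhx : h x = ‖x‖ := by
            simp only [hh, ContinuousLinearMap.add_apply, ContinuousLinearMap.coe_smul',
              Pi.smul_apply, smul_eq_mul, hforth.2, hgorth.2]
            ring
          have hhn : ‖h‖ ≤ 1 := by
            calc ‖h‖ ≤ ‖(1 - s) • f‖ + ‖s • g‖ := norm_add_le _ _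
              _ = |1 - s| * ‖f‖ + |s| * ‖g‖ := by
                  rw [norm_smul_clm, norm_smul_clm]
              _ = (1 - s) + s := by
                  rw [hforth.1, hgorth.1, abs_of_nonneg (by linarith), abs_of_nonneg hs0.le]
                  ring
              _ = 1 := by ring
          exact bjOrth_of_funct x y h hhn hhx hhy
      exact hpres y hxy
  · intro hS y hxy
    obtain ⟨f₀, hf₀, hf₀y⟩ := exists_suppFun_eq_zero x hx y hxy
    obtain ⟨f, hfext, hfy⟩ := exists_extreme_nonneg x hx y f₀ hf₀ (le_of_eq hf₀y.symm)
    obtain ⟨g, hgext, hgy⟩ := exists_extreme_nonneg x hx (-y) f₀ hf₀ (by simp [hf₀y])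
    have hgy' : g y ≤ 0 := by
      have : 0 ≤ g (-y) := hgy
      rw [map_neg] at this
      linarith
    obtain ⟨S, _, hSsub, hTsub⟩ := hS f hfext g hgext
    exact hSsub (hTsub ⟨y, ⟨hfy, hgy'⟩, rfl⟩)
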